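/- Define P_{n,k,l}(x) = ∑_{s=0}^{l} (-1)^s C(n-k, s) C(n-s-1, l-s) x^{n-2s}. Then for integers n ≥ 1, 0 ≤ k ≤ n-1, and any integer l, the sum ∑_{s=0}^{n} (-1)^s P_{n,k+1,s-1}(x) P_{n+1,s+1,l}(x) equals (-1)^{k+1} x^3 (δ_{k,l} + δ_{k,l-1}). -/

import Mathlib

/-- Binomial coefficient C(a,b) for integer arguments, with the convention
    C(a,b) = 0 when b < 0 or b > a. -/
def intChoose (a b : ℤ) : ℤ :=
  if 0 ≤ b ∧ b ≤ a then (a.toNat.choose b.toNat : ℤ) else 0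

/-- P_{n,k,l}(x) = ∑_{s=0}^{l} (-1)^s C(n-k,s) C(n-s-1,l-s) x^{n-2s}, as a function of
    an (invertible) field element x; for l < 0 all terms vanish (the sum degenerates to
    the single s = 0 term containing C(n-1,l) = 0), so P_{n,k,l} = 0 for l < 0. -/
def Ppoly {K : Type*} [Field K] (x : K) (n k l : ℤ) : K :=
  ∑ s ∈ Finset.range (l.toNat + 1),
    (-1 : K) ^ s * (intChoose (n - k) (s : ℤ) : K) *
      (intChoose (n - (s : ℤ) - 1) (l - (s : ℤ)) : K) * x ^ (n - 2 * (s : ℤ))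

namespace PpolyAux

open Finset

lemma ic_neg {a b : ℤ} (h : b < 0) : intChoose a b = 0 := by
  unfold intChoose; rw [if_neg (by omega)]

lemma ic_gt {a b : ℤ} (h : a < b) : intChoose a b = 0 := by
  unfold intChoose; rw [if_neg (by omega)]

lemma ic_nat (m j : ℕ) : intChoose m j = m.choose j := by
  unfold intChoose
  by_cases h : j ≤ m
  · rw [if_pos ⟨by positivity, by exact_mod_cast h⟩]
    simp
  · rw [if_neg (by push_cast; omega), Nat.choose_eq_zero_of_lt (by omega)]
    simp

lemma ic_cast (m : ℕ) (b : ℤ) (hb : 0 ≤ b) : intChoose m b = m.choose b.toNat := by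
  have h : ((b.toNat : ℕ) : ℤ) = b := Int.toNat_of_nonneg hb
  rw [← h, ic_nat, Int.toNat_natCast]

lemma ic_symm (m : ℕ) (b : ℤ) : intChoose m b = intChoose m ((m:ℤ) - b) := by
  by_cases h1 : 0 ≤ b
  · by_cases h2 : b ≤ (m:ℤ)
    · rw [ic_cast m b h1, ic_cast m _ (by omega)]
      have h3 : ((m:ℤ) - b).toNat = m - b.toNat := by omega
      rw [h3, Nat.choose_symm (by omega)]
    · rw [ic_gt (by omega), ic_neg (by omega)]
  · rw [ic_neg (by omega), ic_gt (by omega)]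

lemma ic_pascal (m : ℕ) (b : ℤ) : intChoose ((m:ℤ)+1) b = intChoose m b + intChoose m (b-1) := by
  have hm1 : ((m:ℤ)+1) = ((m+1 : ℕ) : ℤ) := by push_cast; ring
  rcases lt_trichotomy b 0 with h | h | h
  · rw [ic_neg h, ic_neg h, ic_neg (by omega)]; ring
  · subst h
    rw [hm1, ic_cast (m+1) 0 le_rfl, ic_cast m 0 le_rfl, ic_neg (by omega)]
    simp
  · set j := (b-1).toNat with hj
    have e1 : b = ((j + 1 : ℕ) : ℤ) := by omega
    rw [hm1, e1]
    have e3 : ((j + 1 : ℕ) : ℤ) - 1 = ((j:ℕ) : ℤ) := by push_cast; ring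
    rw [e3, ic_nat, ic_nat, ic_nat, Nat.choose_succ_succ]
    push_cast; ring

lemma ic_tri (m a : ℕ) (j : ℤ) :
    intChoose m a * intChoose a j = intChoose m j * intChoose ((m:ℤ) - j) ((a:ℤ) - j) := by
  by_cases hj0 : 0 ≤ j
  · by_cases hja : j ≤ (a:ℤ)
    · by_cases ham : a ≤ m
      · have hj : j.toNat ≤ a := by omega
        have e1 : (m:ℤ) - j = ((m - j.toNat : ℕ) : ℤ) := by omega
        have e2 : (a:ℤ) - j = ((a - j.toNat : ℕ) : ℤ) := by omega
        rw [ic_cast a j hj0, ic_cast m j hj0, e1, e2, ic_nat, ic_nat]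
        exact_mod_cast Nat.choose_mul (n := m) hj
      · -- a > m
        rw [ic_gt (by exact_mod_cast Nat.lt_of_not_le ham : (m:ℤ) < a)]
        by_cases hjm : j ≤ (m:ℤ)
        · rw [ic_gt (by omega : (m:ℤ) - j < (a:ℤ) - j)]; ring
        · rw [ic_gt (by omega : (m:ℤ) < j)]; ring
    · rw [ic_gt (by omega : (a:ℤ) < j), ic_neg (by omega : (a:ℤ) - j < 0)]; ring
  · rw [ic_neg (by omega : j < 0), ic_neg (by omega : j < 0)]; ring


lemma sumD (N m : ℕ) (j : ℤ) (hmN : m < N) :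
    ∑ a ∈ range N, (-1:ℤ)^a * intChoose m a * intChoose a j
      = if j = (m:ℤ) then (-1)^m else 0 := by
  have key : ∀ a ∈ range N, (-1:ℤ)^a * intChoose m a * intChoose a j
      = intChoose m j * ((-1)^a * intChoose ((m:ℤ)-j) ((a:ℤ)-j)) := by
    intro a _
    rw [mul_assoc, ic_tri]; ring
  rw [sum_congr rfl key, ← mul_sum]
  by_cases hj0 : 0 ≤ j
  · by_cases hjm : j ≤ (m:ℤ)
    · set j' := j.toNat with hj'
      have hjj : ((j' : ℕ) : ℤ) = j := Int.toNat_of_nonneg hj0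
      have hj'm : j' ≤ m := by omega
      have h1 : ∑ a ∈ range N, ((-1:ℤ)^a * intChoose ((m:ℤ)-j) ((a:ℤ)-j))
          = ∑ a ∈ Ico j' (m+1), ((-1:ℤ)^a * intChoose ((m:ℤ)-j) ((a:ℤ)-j)) := by
        apply (sum_subset ?_ ?_).symm
        · intro t ht
          simp only [mem_Ico, mem_range] at *
          omega
        · intro t ht ht2
          simp only [mem_Ico, mem_range] at *
          rcases Nat.lt_or_ge t j' with h | h
          · rw [ic_neg (by omega)]; ring
          · rw [ic_gt (by omega)]; ring
      rw [h1, sum_Ico_eq_sum_range]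
      have h2 : ∀ t ∈ range (m + 1 - j'), (-1:ℤ)^(j'+t) * intChoose ((m:ℤ)-j) (((j'+t:ℕ):ℤ) - j)
          = (-1:ℤ)^j' * ((-1)^t * ((m-j').choose t : ℤ)) := by
        intro t ht
        have e1 : (m:ℤ) - j = ((m - j' : ℕ):ℤ) := by omega
        have e2 : (((j'+t:ℕ)):ℤ) - j = ((t:ℕ):ℤ) := by push_cast; omega
        rw [e1, e2, ic_nat, pow_add]; ring
      rw [sum_congr rfl h2, ← mul_sum]
      have e3 : m + 1 - j' = (m - j') + 1 := by omega
      rw [e3, Int.alternating_sum_range_choose]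
      by_cases hfin : j = (m:ℤ)
      · have : j' = m := by omega
        rw [if_pos hfin, if_pos (by omega), hfin]
        rw [ic_cast m (m:ℤ) (by positivity), Int.toNat_natCast, Nat.choose_self, this]
        push_cast; ring
      · rw [if_neg hfin, if_neg (by omega)]; ring
    · rw [ic_gt (by omega : (m:ℤ) < j), if_neg (by omega)]; ring
  · rw [ic_neg (by omega : j < 0), if_neg (by omega)]; ring

lemma sumB' (m b : ℕ) :
    ∑ t ∈ range (m+1), (-1:ℤ)^t * (m.choose t : ℤ) * ((m-t).choose b : ℤ)
      = if b = m then 1 else 0 := by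
  by_cases hbm : b ≤ m
  · set p := m - b with hp
    have key : ∀ t ∈ range (m+1), (-1:ℤ)^t * (m.choose t : ℤ) * ((m-t).choose b : ℤ)
        = (m.choose b : ℤ) * ((-1)^t * (p.choose t : ℤ)) := by
      intro t ht
      have htm : t ≤ m := by simp only [mem_range] at ht; omega
      have h1 : (m.choose t : ℤ) = intChoose m ((m - t : ℕ):ℤ) := by
        rw [ic_nat, Nat.choose_symm htm]
      have h2 : ((m-t).choose b : ℤ) = intChoose ((m-t:ℕ):ℤ) ((b:ℕ):ℤ) := (ic_nat _ _).symm
      rw [h1, h2, mul_assoc, ic_tri m (m-t) (b:ℤ)]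
      have e1 : (m:ℤ) - (b:ℤ) = ((p:ℕ):ℤ) := by omega
      have e2 : (((m - t:ℕ)):ℤ) - (b:ℤ) = ((p:ℕ):ℤ) - ((t:ℕ):ℤ) := by push_cast; omega
      rw [e1, e2, ← ic_symm p (t:ℤ), ic_nat, ic_nat]
      ring
    rw [sum_congr rfl key, ← mul_sum]
    have h3 : ∑ t ∈ range (m+1), ((-1:ℤ)^t * (p.choose t : ℤ))
        = ∑ t ∈ range (p+1), ((-1:ℤ)^t * (p.choose t : ℤ)) := by
      apply (sum_subset ?_ ?_).symm
      · intro t ht; simp only [mem_range] at *; omega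
      · intro t ht ht2
        simp only [mem_range] at *
        rw [Nat.choose_eq_zero_of_lt (by omega)]; ring
    rw [h3, Int.alternating_sum_range_choose]
    by_cases hfin : b = m
    · rw [if_pos hfin, if_pos (by omega), hfin, Nat.choose_self]; ring
    · rw [if_neg hfin, if_neg (by omega)]; ring
  · have key : ∀ t ∈ range (m+1), (-1:ℤ)^t * (m.choose t : ℤ) * ((m-t).choose b : ℤ) = 0 := by
      intro t ht
      have : (m-t).choose b = 0 := Nat.choose_eq_zero_of_lt (by omega)
      rw [this]; ring
    rw [sum_congr rfl key, if_neg (by omega)]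
    simp

lemma sumB (n a b : ℕ) (ha : a ≤ n) (hb : b ≤ n) :
    ∑ s ∈ range (n+1), (-1:ℤ)^s * intChoose ((n:ℤ)-(a:ℤ)-1) ((s:ℤ)-1-(a:ℤ)) * intChoose ((n:ℤ)-(s:ℤ)) (b:ℤ)
      = if (b:ℤ) = (n:ℤ)-(a:ℤ)-1 then (-1:ℤ)^(a+1) else 0 := by
  by_cases han : a = n
  · subst han
    have key : ∀ s ∈ range (a+1), (-1:ℤ)^s * intChoose ((a:ℤ)-(a:ℤ)-1) ((s:ℤ)-1-(a:ℤ)) * intChoose ((a:ℤ)-(s:ℤ)) (b:ℤ) = 0 := by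
      intro s hs
      simp only [mem_range] at hs
      rw [ic_neg (by omega : (s:ℤ)-1-(a:ℤ) < 0)]; ring
    rw [sum_congr rfl key, if_neg (by omega)]
    simp
  · have ham : a < n := by omega
    set m := n - 1 - a with hm
    have h1 : ∑ s ∈ range (n+1), (-1:ℤ)^s * intChoose ((n:ℤ)-(a:ℤ)-1) ((s:ℤ)-1-(a:ℤ)) * intChoose ((n:ℤ)-(s:ℤ)) (b:ℤ)
        = ∑ s ∈ Ico (a+1) (n+1), (-1:ℤ)^s * intChoose ((n:ℤ)-(a:ℤ)-1) ((s:ℤ)-1-(a:ℤ)) * intChoose ((n:ℤ)-(s:ℤ)) (b:ℤ) := by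
      apply (sum_subset ?_ ?_).symm
      · intro t ht; simp only [mem_Ico, mem_range] at *; omega
      · intro t ht ht2
        simp only [mem_Ico, mem_range] at *
        rw [ic_neg (by omega : (t:ℤ)-1-(a:ℤ) < 0)]; ring
    rw [h1, sum_Ico_eq_sum_range]
    have e0 : n + 1 - (a+1) = m + 1 := by omega
    have h2 : ∀ t ∈ range (m+1), (-1:ℤ)^(a+1+t) * intChoose ((n:ℤ)-(a:ℤ)-1) ((((a+1+t:ℕ)):ℤ) - 1 - (a:ℤ)) * intChoose ((n:ℤ)-(((a+1+t:ℕ)):ℤ)) (b:ℤ)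
        = (-1:ℤ)^(a+1) * ((-1)^t * (m.choose t : ℤ) * (((m-t).choose b) : ℤ)) := by
      intro t ht
      simp only [mem_range] at ht
      have e1 : (n:ℤ)-(a:ℤ)-1 = ((m:ℕ):ℤ) := by omega
      have e2 : (((a+1+t:ℕ)):ℤ) - 1 - (a:ℤ) = ((t:ℕ):ℤ) := by push_cast; ring
      have e3 : (n:ℤ) - (((a+1+t:ℕ)):ℤ) = ((m - t:ℕ):ℤ) := by push_cast; omega
      rw [e1, e2, e3, ic_nat, ic_nat, pow_add]
      ring
    rw [e0, sum_congr rfl h2, ← mul_sum, sumB' m b]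
    by_cases hfin : (b:ℤ) = (n:ℤ)-(a:ℤ)-1
    · rw [if_pos hfin, if_pos (by omega)]; ring
    · rw [if_neg hfin, if_neg (by omega)]; ring




lemma neg_one_pow_eq {p q : ℕ} (h : (p + q) % 2 = 0) : (-1:ℤ)^p = (-1:ℤ)^q := by
  rcases Nat.even_or_odd p with hp | hp
  · have hq : Even q := by
      rcases hp with ⟨c, hc⟩
      rcases Nat.even_or_odd q with h' | h'
      · exact h'
      · exfalso; rcases h' with ⟨d, hd⟩; omega
    rw [hp.neg_one_pow, hq.neg_one_pow]
  · have hq : Odd q := by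
      rcases hp with ⟨c, hc⟩
      rcases Nat.even_or_odd q with h' | h'
      · exfalso; rcases h' with ⟨d, hd⟩; omega
      · exact h'
    rw [hp.neg_one_pow, hq.neg_one_pow]

lemma sumC (n k : ℕ) (l : ℤ) (hn : 1 ≤ n) (hk : k ≤ n - 1) :
    ∑ a ∈ range n, (-1:ℤ)^(n+a) * intChoose ((n:ℤ)-(k:ℤ)-1) (a:ℤ) * intChoose ((a:ℤ)+1) (l - (n:ℤ) + (a:ℤ) + 1)
      = (-1:ℤ)^(k+1) * ((if (k:ℤ) = l then 1 else 0) + (if (k:ℤ) = l - 1 then 1 else 0)) := by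
  set m := n - 1 - k with hm
  have hmn : m < n := by omega
  have e1 : (n:ℤ)-(k:ℤ)-1 = ((m:ℕ):ℤ) := by omega
  have key : ∀ a ∈ range n, (-1:ℤ)^(n+a) * intChoose ((n:ℤ)-(k:ℤ)-1) (a:ℤ) * intChoose ((a:ℤ)+1) (l - (n:ℤ) + (a:ℤ) + 1)
      = (-1:ℤ)^n * ((-1)^a * intChoose m a * intChoose a ((n:ℤ)-l))
        + (-1:ℤ)^n * ((-1)^a * intChoose m a * intChoose a ((n:ℤ)-l-1)) := by
    intro a _
    have e2 : intChoose ((a:ℤ)+1) (l - (n:ℤ) + (a:ℤ) + 1) = intChoose ((a:ℤ)+1) ((n:ℤ)-l) := by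
      have h3 : ((a:ℤ)+1) = (((a+1:ℕ)):ℤ) := by push_cast; ring
      rw [h3, ic_symm (a+1) (l - (n:ℤ) + (a:ℤ) + 1)]
      congr 1
      push_cast; ring
    rw [e2, e1, ic_pascal a ((n:ℤ)-l), pow_add]
    have e4 : (n:ℤ) - l - 1 = ((n:ℤ)-l) - 1 := by ring
    rw [e4]
    ring
  rw [sum_congr rfl key, sum_add_distrib, ← mul_sum, ← mul_sum,
    sumD n m ((n:ℤ)-l) hmn, sumD n m ((n:ℤ)-l-1) hmn]
  have hc1 : ((n:ℤ)-l = (m:ℤ)) ↔ ((k:ℤ) = l - 1) := by omega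
  have hc2 : ((n:ℤ)-l-1 = (m:ℤ)) ↔ ((k:ℤ) = l) := by omega
  have hpow : (-1:ℤ)^n * (-1:ℤ)^m = (-1:ℤ)^(k+1) := by
    rw [← pow_add]; exact neg_one_pow_eq (by omega)
  by_cases h1 : (k:ℤ) = l
  · have h2 : ¬ ((k:ℤ) = l - 1) := by omega
    rw [if_pos h1, if_neg h2, if_neg (by rw [hc1]; exact h2), if_pos (by rw [hc2]; exact h1)]
    rw [hpow]; ring
  · by_cases h2 : (k:ℤ) = l - 1
    · rw [if_neg h1, if_pos h2, if_pos (by rw [hc1]; exact h2), if_neg (by rw [hc2]; exact h1)]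
      rw [hpow]; ring
    · rw [if_neg h1, if_neg h2, if_neg (by rw [hc1]; exact h2), if_neg (by rw [hc2]; exact h1)]
      ring

lemma Ppoly_eq_sum {K : Type*} [Field K] (x : K) (n k l : ℤ) (N : ℕ)
    (h : ∀ a : ℕ, N ≤ a → intChoose (n - k) (a:ℤ) = 0) :
    Ppoly x n k l = ∑ a ∈ range N,
      (-1:K)^a * (intChoose (n-k) (a:ℤ) : K) * (intChoose (n - (a:ℤ) - 1) (l - (a:ℤ)) : K) * x ^ (n - 2*(a:ℤ)) := by
  unfold Ppoly
  have e1 : ∑ s ∈ range (l.toNat + 1),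
      (-1 : K) ^ s * (intChoose (n - k) (s : ℤ) : K) *
        (intChoose (n - (s : ℤ) - 1) (l - (s : ℤ)) : K) * x ^ (n - 2 * (s : ℤ))
      = ∑ s ∈ range (max (l.toNat + 1) N),
      (-1 : K) ^ s * (intChoose (n - k) (s : ℤ) : K) *
        (intChoose (n - (s : ℤ) - 1) (l - (s : ℤ)) : K) * x ^ (n - 2 * (s : ℤ)) := by
    apply sum_subset
    · intro t ht; simp only [mem_range] at *; omega
    · intro t ht ht2
      simp only [mem_range] at *
      rw [ic_neg (by omega : l - (t:ℤ) < 0)]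
      push_cast; ring
  have e2 : ∑ s ∈ range N,
      (-1 : K) ^ s * (intChoose (n - k) (s : ℤ) : K) *
        (intChoose (n - (s : ℤ) - 1) (l - (s : ℤ)) : K) * x ^ (n - 2 * (s : ℤ))
      = ∑ s ∈ range (max (l.toNat + 1) N),
      (-1 : K) ^ s * (intChoose (n - k) (s : ℤ) : K) *
        (intChoose (n - (s : ℤ) - 1) (l - (s : ℤ)) : K) * x ^ (n - 2 * (s : ℤ)) := by
    apply sum_subset
    · intro t ht; simp only [mem_range] at *; omega
    · intro t ht ht2
      simp only [mem_range] at *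
      rw [h t (by omega)]
      push_cast; ring
  rw [e1, ← e2]
end PpolyAux

open Finset PpolyAux

/-- ∑_{s=0}^{n} (-1)^s P_{n,k+1,s-1}(x) P_{n+1,s+1,l}(x)
      = (-1)^{k+1} x³ (δ_{k,l} + δ_{k,l-1}), for n ≥ 1, 0 ≤ k ≤ n-1, any integer l. -/
theorem Ppoly_convolution_two {K : Type*} [Field K] (x : K) (hx : x ≠ 0)
    (n k : ℕ) (hn : 1 ≤ n) (hk : k ≤ n - 1) (l : ℤ) :
    ∑ s ∈ Finset.range (n + 1),
        (-1 : K) ^ s * Ppoly x (n : ℤ) ((k : ℤ) + 1) ((s : ℤ) - 1) *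
          Ppoly x ((n : ℤ) + 1) ((s : ℤ) + 1) l
      = (-1 : K) ^ (k + 1) * x ^ 3 *
          ((if (k : ℤ) = l then 1 else 0) + (if (k : ℤ) = l - 1 then 1 else 0)) := by
  classical
  have hP1 : ∀ s : ℕ, Ppoly x (n:ℤ) ((k:ℤ)+1) ((s:ℤ)-1)
      = ∑ a ∈ range (n+1), (-1:K)^a * ((intChoose ((n:ℤ)-(k:ℤ)-1) (a:ℤ) : ℤ) : K) *
          ((intChoose ((n:ℤ)-(a:ℤ)-1) ((s:ℤ)-1-(a:ℤ)) : ℤ) : K) * x ^ ((n:ℤ) - 2*(a:ℤ)) := by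
    intro s
    rw [Ppoly_eq_sum x (n:ℤ) ((k:ℤ)+1) ((s:ℤ)-1) (n+1)
      (fun a ha => ic_gt (by push_cast; omega))]
    apply sum_congr rfl; intro a _
    have r1 : (n:ℤ) - ((k:ℤ)+1) = (n:ℤ)-(k:ℤ)-1 := by ring
    rw [r1]
  have hP2 : ∀ s : ℕ, Ppoly x ((n:ℤ)+1) ((s:ℤ)+1) l
      = ∑ b ∈ range (n+1), (-1:K)^b * ((intChoose ((n:ℤ)-(s:ℤ)) (b:ℤ) : ℤ) : K) *
          ((intChoose ((n:ℤ)-(b:ℤ)) (l-(b:ℤ)) : ℤ) : K) * x ^ ((n:ℤ)+1 - 2*(b:ℤ)) := by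
    intro s
    rw [Ppoly_eq_sum x ((n:ℤ)+1) ((s:ℤ)+1) l (n+1)
      (fun a ha => ic_gt (by push_cast; omega))]
    apply sum_congr rfl; intro b _
    have r2 : (n:ℤ)+1 - ((s:ℤ)+1) = (n:ℤ)-(s:ℤ) := by ring
    have r3 : (n:ℤ)+1 - (b:ℤ) - 1 = (n:ℤ)-(b:ℤ) := by ring
    rw [r2, r3]
  calc ∑ s ∈ Finset.range (n + 1),
        (-1 : K) ^ s * Ppoly x (n : ℤ) ((k : ℤ) + 1) ((s : ℤ) - 1) *
          Ppoly x ((n : ℤ) + 1) ((s : ℤ) + 1) l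
      = ∑ s ∈ range (n+1), ∑ a ∈ range (n+1), ∑ b ∈ range (n+1),
          ((-1:K)^s * (((intChoose ((n:ℤ)-(a:ℤ)-1) ((s:ℤ)-1-(a:ℤ)) : ℤ) : K)
            * ((intChoose ((n:ℤ)-(s:ℤ)) (b:ℤ) : ℤ) : K))) *
          (((-1:K)^a * ((intChoose ((n:ℤ)-(k:ℤ)-1) (a:ℤ) : ℤ) : K) * x ^ ((n:ℤ) - 2*(a:ℤ))) *
           ((-1:K)^b * ((intChoose ((n:ℤ)-(b:ℤ)) (l-(b:ℤ)) : ℤ) : K) * x ^ ((n:ℤ)+1 - 2*(b:ℤ)))) := by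
        apply sum_congr rfl; intro s _
        rw [hP1 s, hP2 s, mul_assoc, sum_mul_sum, mul_sum]
        apply sum_congr rfl; intro a _
        rw [mul_sum]
        apply sum_congr rfl; intro b _
        ring
    _ = ∑ a ∈ range (n+1), ∑ b ∈ range (n+1),
          (((-1:K)^a * ((intChoose ((n:ℤ)-(k:ℤ)-1) (a:ℤ) : ℤ) : K) * x ^ ((n:ℤ) - 2*(a:ℤ))) *
           ((-1:K)^b * ((intChoose ((n:ℤ)-(b:ℤ)) (l-(b:ℤ)) : ℤ) : K) * x ^ ((n:ℤ)+1 - 2*(b:ℤ)))) *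
          (((if (b:ℤ) = (n:ℤ)-(a:ℤ)-1 then (-1:ℤ)^(a+1) else 0) : ℤ) : K) := by
        rw [sum_comm]
        apply sum_congr rfl; intro a ha
        rw [sum_comm]
        apply sum_congr rfl; intro b hb
        simp only [mem_range] at ha hb
        rw [← sumB n a b (by omega) (by omega), Int.cast_sum, mul_sum]
        apply sum_congr rfl; intro s _
        push_cast
        ring
    _ = ∑ a ∈ range n,
          (((-1:K)^a * ((intChoose ((n:ℤ)-(k:ℤ)-1) (a:ℤ) : ℤ) : K) * x ^ ((n:ℤ) - 2*(a:ℤ))) *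
           ((-1:K)^(n-1-a) * ((intChoose ((n:ℤ)-((n-1-a : ℕ):ℤ)) (l-((n-1-a : ℕ):ℤ)) : ℤ) : K)
              * x ^ ((n:ℤ)+1 - 2*((n-1-a : ℕ):ℤ)))) *
          (((-1:ℤ)^(a+1) : ℤ) : K) := by
        rw [sum_range_succ]
        have hz : ((intChoose ((n:ℤ)-(k:ℤ)-1) ((n:ℕ):ℤ) : ℤ) : K) = 0 := by
          rw [ic_gt (by omega : (n:ℤ)-(k:ℤ)-1 < (n:ℕ))]; exact Int.cast_zero
        have hlast : ∑ b ∈ range (n+1),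
            (((-1:K)^n * ((intChoose ((n:ℤ)-(k:ℤ)-1) ((n:ℕ):ℤ) : ℤ) : K) * x ^ ((n:ℤ) - 2*((n:ℕ):ℤ))) *
             ((-1:K)^b * ((intChoose ((n:ℤ)-(b:ℤ)) (l-(b:ℤ)) : ℤ) : K) * x ^ ((n:ℤ)+1 - 2*(b:ℤ)))) *
            (((if (b:ℤ) = (n:ℤ)-((n:ℕ):ℤ)-1 then (-1:ℤ)^(n+1) else 0) : ℤ) : K) = 0 := by
          apply sum_eq_zero; intro b _
          rw [hz]; ring
        rw [hlast, add_zero]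
        apply sum_congr rfl; intro a ha
        simp only [mem_range] at ha
        rw [sum_eq_single (n-1-a)]
        · rw [if_pos (by push_cast; omega)]
        · intro b hb hne
          rw [if_neg (by simp only [mem_range] at hb; push_cast; omega)]
          push_cast; ring
        · intro hb
          exact absurd (mem_range.mpr (by omega)) hb
    _ = x ^ 3 * ((∑ a ∈ range n, (-1:ℤ)^(n+a) * intChoose ((n:ℤ)-(k:ℤ)-1) (a:ℤ)
            * intChoose ((a:ℤ)+1) (l - (n:ℤ) + (a:ℤ) + 1) : ℤ) : K) := by
        rw [Int.cast_sum, mul_sum]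
        apply sum_congr rfl; intro a ha
        simp only [mem_range] at ha
        have e1 : (n:ℤ) - ((n-1-a : ℕ):ℤ) = (a:ℤ)+1 := by push_cast; omega
        have e2 : l - ((n-1-a : ℕ):ℤ) = l - (n:ℤ) + (a:ℤ) + 1 := by push_cast; omega
        have ex : x ^ ((n:ℤ) - 2*(a:ℤ)) * x ^ ((n:ℤ)+1 - 2*((n-1-a : ℕ):ℤ)) = x ^ (3:ℕ) := by
          rw [← zpow_add₀ hx]
          have e3 : (n:ℤ) - 2*(a:ℤ) + ((n:ℤ)+1 - 2*((n-1-a : ℕ):ℤ)) = ((3:ℕ):ℤ) := by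
            push_cast; omega
          rw [e3, zpow_natCast]
        have epow : (-1:K)^a * ((-1:K)^(n-1-a) * (-1:K)^(a+1)) = (-1:K)^(n+a) := by
          rw [← pow_add, ← pow_add]
          congr 1
          omega
        rw [e1, e2]
        push_cast
        calc (-1:K) ^ a * ((intChoose ((n:ℤ)-(k:ℤ)-1) (a:ℤ) : ℤ) : K) * x ^ ((n:ℤ) - 2*(a:ℤ)) *
              ((-1:K) ^ (n - 1 - a) * ((intChoose ((a:ℤ)+1) (l - (n:ℤ) + (a:ℤ) + 1) : ℤ) : K) *
                x ^ ((n:ℤ)+1 - 2*((n-1-a : ℕ):ℤ))) * (-1:K) ^ (a + 1)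
            = ((-1:K)^a * ((-1:K)^(n-1-a) * (-1:K)^(a+1))) *
              (((intChoose ((n:ℤ)-(k:ℤ)-1) (a:ℤ) : ℤ) : K) *
                ((intChoose ((a:ℤ)+1) (l - (n:ℤ) + (a:ℤ) + 1) : ℤ) : K)) *
              (x ^ ((n:ℤ) - 2*(a:ℤ)) * x ^ ((n:ℤ)+1 - 2*((n-1-a : ℕ):ℤ))) := by ring
          _ = x ^ (3:ℕ) * ((-1:K) ^ (n + a) * ((intChoose ((n:ℤ)-(k:ℤ)-1) (a:ℤ) : ℤ) : K) *
                ((intChoose ((a:ℤ)+1) (l - (n:ℤ) + (a:ℤ) + 1) : ℤ) : K)) := by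
              rw [ex, epow]; ring
    _ = (-1 : K) ^ (k + 1) * x ^ 3 *
          ((if (k : ℤ) = l then 1 else 0) + (if (k : ℤ) = l - 1 then 1 else 0)) := by
        rw [sumC n k l hn hk]
        push_cast
        ring
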